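/- Stability of the centering operator: for every (Y,p) ∈ L⁰ × ℤ, J(Y,p) ∈ L^m; in particular, writing J(Y,p) = (X,p'), both X⁺ ≠ 0 and X⁻ ≠ 0. -/

import Mathlib

open scoped BigOperators

namespace COB

/-- Vectors of queue sizes indexed by prices in `I = {−d',…,d'}` (functions `ℤ → ℕ`
vanishing outside `I`; the support condition is part of membership in `Em`). -/
abbrev VecC := ℤ → ℕ

/-- Pairs (buy side, sell side). -/
abbrev EC := VecC × VecC

/-- A vector is supported in `{−d',…,d'}`. -/
def suppIn (d' : ℕ) (Z : VecC) : Prop :=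
  ∀ j : ℤ, Z j ≠ 0 → -(d' : ℤ) ≤ j ∧ j ≤ (d' : ℤ)

/-- Price support of a vector, inside `I = {−d',…,d'}`. -/
noncomputable def suppC (d' : ℕ) (Z : VecC) : Finset ℤ :=
  (Finset.Icc (-(d' : ℤ)) (d' : ℤ)).filter fun j => 0 < Z j

/-- `sup` of a finite set of prices, with the convention `sup ∅ = −d'`. -/
def supD (d' : ℕ) (S : Finset ℤ) : ℤ := if h : S.Nonempty then S.max' h else -(d' : ℤ)

/-- `inf` of a finite set of prices, with the convention `inf ∅ = d'`. -/
def infD (d' : ℕ) (S : Finset ℤ) : ℤ := if h : S.Nonempty then S.min' h else (d' : ℤ)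

/-- bid price `b(X) = sup supp(X⁺)` (convention `sup supp(0) = −d'`). -/
noncomputable def bC (d' : ℕ) (X : EC) : ℤ := supD d' (suppC d' X.1)

/-- ask price `a(X) = inf supp(X⁻)` (convention `inf supp(0) = d'`). -/
noncomputable def aC (d' : ℕ) (X : EC) : ℤ := infD d' (suppC d' X.2)

/-- `E^m`: configurations supported in `I` with nonempty buy and sell sides. -/
def Em (d' : ℕ) : Set EC :=
  {X | suppIn d' X.1 ∧ suppIn d' X.2 ∧ X.1 ≠ 0 ∧ X.2 ≠ 0}

/-- `L⁰`: elements of `E^m` with `a(X) > b(X)`. -/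
def L0 (d' : ℕ) : Set EC := {X | X ∈ Em d' ∧ bC d' X < aC d' X}

/-- `p̂`: the parity of `p` (`0` if `p` is even, `1` if `p` is odd). -/
def hatp (p : ℤ) : ℤ := p % 2

/-- `⌈p/2⌉` for an integer `p`. -/
def ceilHalf (p : ℤ) : ℤ := Int.fdiv (p + 1) 2

/-- `[p,p'] = ⌈p'/2⌉ − ⌈p/2⌉`. -/
def shift (p p' : ℤ) : ℤ := ceilHalf p' - ceilHalf p

/-- The centred state space `L^m`. -/
def Lm (d' : ℕ) : Set (EC × ℤ) :=
  {Xp | Xp.1 ∈ Em d' ∧ bC d' Xp.1 < aC d' Xp.1 ∧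
    aC d' Xp.1 + bC d' Xp.1 + hatp Xp.2 = 0}

/-- The truncating shift `σ_i` on a single vector. -/
def sigmaV (d' : ℕ) (i : ℤ) (Y : VecC) : VecC := fun j =>
  if min (d' : ℤ) ((d' : ℤ) - i) < j ∨ j < max (-(d' : ℤ)) (-(d' : ℤ) - i) then 0
  else Y (j + i)

/-- The truncating shift `σ_i` acting componentwise on pairs. -/
def sigmaP (d' : ℕ) (i : ℤ) (Y : EC) : EC := (sigmaV d' i Y.1, sigmaV d' i Y.2)

/-- The centering operator `J(Y,p) = (σ_{[p,p']}(Y), p')`, `p' = p + a(Y) + b(Y) + p̂`. -/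
noncomputable def J (d' : ℕ) (Y : EC) (p : ℤ) : EC × ℤ :=
  (sigmaP d' (shift p (p + aC d' Y + bC d' Y + hatp p)) Y,
    p + aC d' Y + bC d' Y + hatp p)


lemma mem_suppC {d' : ℕ} {Z : VecC} (hs : suppIn d' Z) (j : ℤ) :
    j ∈ suppC d' Z ↔ Z j ≠ 0 := by
  simp only [suppC, Finset.mem_filter, Finset.mem_Icc]
  constructor
  · rintro ⟨_, h⟩; omega
  · intro h; exact ⟨hs j h, Nat.pos_of_ne_zero h⟩

lemma supD_spec {d' : ℕ} {Z : VecC} (hs : suppIn d' Z) (hne : Z ≠ 0) :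
    Z (supD d' (suppC d' Z)) ≠ 0 ∧ -(d' : ℤ) ≤ supD d' (suppC d' Z) ∧
      supD d' (suppC d' Z) ≤ (d' : ℤ) ∧
      ∀ j, Z j ≠ 0 → j ≤ supD d' (suppC d' Z) := by
  obtain ⟨j, hj⟩ := Function.ne_iff.mp hne
  have hS : (suppC d' Z).Nonempty := ⟨j, (mem_suppC hs j).mpr hj⟩
  have hsup : supD d' (suppC d' Z) = (suppC d' Z).max' hS := dif_pos hS
  have hmem := (suppC d' Z).max'_mem hS
  rw [← hsup] at hmem
  refine ⟨(mem_suppC hs _).mp hmem, (hs _ ((mem_suppC hs _).mp hmem)).1,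
    (hs _ ((mem_suppC hs _).mp hmem)).2, fun k hk => ?_⟩
  rw [hsup]
  exact Finset.le_max' _ k ((mem_suppC hs k).mpr hk)

lemma infD_spec {d' : ℕ} {Z : VecC} (hs : suppIn d' Z) (hne : Z ≠ 0) :
    Z (infD d' (suppC d' Z)) ≠ 0 ∧ -(d' : ℤ) ≤ infD d' (suppC d' Z) ∧
      infD d' (suppC d' Z) ≤ (d' : ℤ) ∧
      ∀ j, Z j ≠ 0 → infD d' (suppC d' Z) ≤ j := by
  obtain ⟨j, hj⟩ := Function.ne_iff.mp hne
  have hS : (suppC d' Z).Nonempty := ⟨j, (mem_suppC hs j).mpr hj⟩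
  have hinf : infD d' (suppC d' Z) = (suppC d' Z).min' hS := dif_pos hS
  have hmem := (suppC d' Z).min'_mem hS
  rw [← hinf] at hmem
  refine ⟨(mem_suppC hs _).mp hmem, (hs _ ((mem_suppC hs _).mp hmem)).1,
    (hs _ ((mem_suppC hs _).mp hmem)).2, fun k hk => ?_⟩
  rw [hinf]
  exact Finset.min'_le _ k ((mem_suppC hs k).mpr hk)

lemma sigmaV_ne_zero {d' : ℕ} {i : ℤ} {Y : VecC} {j : ℤ}
    (h : sigmaV d' i Y j ≠ 0) :
    j ≤ min (d' : ℤ) ((d' : ℤ) - i) ∧ max (-(d' : ℤ)) (-(d' : ℤ) - i) ≤ j ∧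
      Y (j + i) ≠ 0 := by
  unfold sigmaV at h
  by_cases hc : min (d' : ℤ) ((d' : ℤ) - i) < j ∨ j < max (-(d' : ℤ)) (-(d' : ℤ) - i)
  · rw [if_pos hc] at h; exact absurd rfl h
  · rw [if_neg hc] at h
    push_neg at hc
    exact ⟨hc.1, hc.2, h⟩

lemma sigmaV_eval {d' : ℕ} {i j : ℤ} (h1 : j ≤ min (d' : ℤ) ((d' : ℤ) - i))
    (h2 : max (-(d' : ℤ)) (-(d' : ℤ) - i) ≤ j) (Y : VecC) :
    sigmaV d' i Y j = Y (j + i) := by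
  unfold sigmaV
  rw [if_neg]
  omega

/-- Lemma D.1 of Cont–Degond–Xuan: the centering operator maps
`L⁰ × ℤ` into `L^m`; in particular both sides of the shifted book are nonempty. -/
theorem J_maps_into_Lm (d' : ℕ) (hd' : 1 ≤ d') :
    ∀ Y ∈ L0 d', ∀ p : ℤ,
      J d' Y p ∈ Lm d' ∧ (J d' Y p).1.1 ≠ 0 ∧ (J d' Y p).1.2 ≠ 0 := by
  rintro Y ⟨⟨hs1, hs2, hne1, hne2⟩, hba⟩ p
  obtain ⟨hb0, hbl, hbu, hbmax⟩ := supD_spec hs1 hne1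
  obtain ⟨ha0, hal, hau, hamin⟩ := infD_spec hs2 hne2
  have hbC : bC d' Y = supD d' (suppC d' Y.1) := rfl
  have haC : aC d' Y = infD d' (suppC d' Y.2) := rfl
  set a := aC d' Y with ha
  set b := bC d' Y with hb
  rw [← hbC] at hb0 hbl hbu hbmax
  rw [← haC] at ha0 hal hau hamin
  have hba' : b < a := hba
  set p' := p + a + b + hatp p with hp'
  set i := shift p p' with hi
  -- the shift equals ⌈(a+b)/2⌉
  have hi2 : i = (a + b + 1) / 2 := by
    have e1 : ceilHalf p' = (p' + 1) / 2 := Int.fdiv_eq_ediv_of_nonneg _ (by norm_num)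
    have e2 : ceilHalf p = (p + 1) / 2 := Int.fdiv_eq_ediv_of_nonneg _ (by norm_num)
    have e3 : hatp p = p % 2 := rfl
    rw [hi, shift, e1, e2, hp', e3]
    omega
  -- key window facts
  have hw1 : b - i ≤ min (d' : ℤ) ((d' : ℤ) - i) := by omega
  have hw2 : max (-(d' : ℤ)) (-(d' : ℤ) - i) ≤ b - i := by omega
  have hw3 : a - i ≤ min (d' : ℤ) ((d' : ℤ) - i) := by omega
  have hw4 : max (-(d' : ℤ)) (-(d' : ℤ) - i) ≤ a - i := by omega
  have hJ : J d' Y p = (sigmaP d' i Y, p') := rfl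
  set X : EC := sigmaP d' i Y with hX
  have hX1 : X.1 = sigmaV d' i Y.1 := rfl
  have hX2 : X.2 = sigmaV d' i Y.2 := rfl
  -- support conditions
  have hsX1 : suppIn d' X.1 := by
    intro j hj
    rw [hX1] at hj
    obtain ⟨h1, h2, _⟩ := sigmaV_ne_zero hj
    omega
  have hsX2 : suppIn d' X.2 := by
    intro j hj
    rw [hX2] at hj
    obtain ⟨h1, h2, _⟩ := sigmaV_ne_zero hj
    omega
  -- nonemptiness witnesses
  have hXb : X.1 (b - i) ≠ 0 := by
    rw [hX1, sigmaV_eval hw1 hw2]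
    have : b - i + i = b := by ring
    rw [this]
    exact hb0
  have hXa : X.2 (a - i) ≠ 0 := by
    rw [hX2, sigmaV_eval hw3 hw4]
    have : a - i + i = a := by ring
    rw [this]
    exact ha0
  have hXne1 : X.1 ≠ 0 := fun h => hXb (by rw [h]; rfl)
  have hXne2 : X.2 ≠ 0 := fun h => hXa (by rw [h]; rfl)
  -- compute bC and aC of X
  have hSb : (suppC d' X.1).Nonempty := ⟨b - i, (mem_suppC hsX1 _).mpr hXb⟩
  have hSa : (suppC d' X.2).Nonempty := ⟨a - i, (mem_suppC hsX2 _).mpr hXa⟩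
  have hbCX : bC d' X = b - i := by
    rw [bC, supD, dif_pos hSb]
    apply le_antisymm
    · apply Finset.max'_le
      intro k hk
      have hk' := (mem_suppC hsX1 k).mp hk
      rw [hX1] at hk'
      obtain ⟨_, _, h3⟩ := sigmaV_ne_zero hk'
      have := hbmax _ h3
      omega
    · exact Finset.le_max' _ _ ((mem_suppC hsX1 _).mpr hXb)
  have haCX : aC d' X = a - i := by
    rw [aC, infD, dif_pos hSa]
    apply le_antisymm
    · exact Finset.min'_le _ _ ((mem_suppC hsX2 _).mpr hXa)
    · apply Finset.le_min'
      intro k hk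
      have hk' := (mem_suppC hsX2 k).mp hk
      rw [hX2] at hk'
      obtain ⟨_, _, h3⟩ := sigmaV_ne_zero hk'
      have := hamin _ h3
      omega
  rw [hJ]
  refine ⟨⟨⟨hsX1, hsX2, hXne1, hXne2⟩, ?_, ?_⟩, hXne1, hXne2⟩
  · show bC d' X < aC d' X
    rw [hbCX, haCX]
    omega
  · show aC d' X + bC d' X + hatp p' = 0
    rw [hbCX, haCX]
    have e3 : hatp p' = p' % 2 := rfl
    have e4 : hatp p = p % 2 := rfl
    rw [e3, hp', e4]
    omega

end COB
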